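/- arXiv:1904.13297 — 2 statements merged into one kernel-verified Lean document; each statement's English description precedes it below -/
import Mathlib

section
/- The matrices A₁ = [[1,2,1],[1,3,2],[1,3,3]] and A₂ = [[1,1,4],[1,2,5],[1,1,5]], viewed as linear maps of ℝ³, do not share a common proper invariant subspace: there is no ℝ-linear subspace W of ℝ³ with 0 ≠ W ≠ ℝ³ such that A₁·W ⊆ W and A₂·W ⊆ W. -/
open Matrix


private lemma triangle_key (x : Fin 3 → ℝ) :
    (!![(-2:ℝ), -11, 4; -2, -14, 9; 0, -10, 16]).mulVecLin x =
      (!![1, 2, 1; 1, 3, 2; 1, 3, 3] : Matrix (Fin 3) (Fin 3) ℝ).mulVecLin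
        ((!![1, 1, 4; 1, 2, 5; 1, 1, 5] : Matrix (Fin 3) (Fin 3) ℝ).mulVecLin x) -
      (!![1, 1, 4; 1, 2, 5; 1, 1, 5] : Matrix (Fin 3) (Fin 3) ℝ).mulVecLin
        ((!![1, 2, 1; 1, 3, 2; 1, 3, 3] : Matrix (Fin 3) (Fin 3) ℝ).mulVecLin x) := by
  funext i
  fin_cases i <;>
    simp [Matrix.mulVecLin_apply, Matrix.mulVec, dotProduct, Fin.sum_univ_three] <;> ring

private lemma triangle_inj (x : Fin 3 → ℝ)
    (hx : (!![(-2:ℝ), -11, 4; -2, -14, 9; 0, -10, 16]).mulVecLin x = 0) : x = 0 := by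
  have h := congrFun hx
  funext i
  have h0 := h 0; have h1 := h 1; have h2 := h 2
  simp [Matrix.mulVecLin_apply, Matrix.mulVec, dotProduct, Fin.sum_univ_three] at h0 h1 h2
  fin_cases i <;> simp <;> linarith

private lemma triangle_surj (y : Fin 3 → ℝ) :
    ∃ x, (!![(-2:ℝ), -11, 4; -2, -14, 9; 0, -10, 16]).mulVecLin x = y := by
  refine ⟨(!![(67:ℝ)/2, -34, 43/4; -8, 8, -5/2; -5, 5, -3/2]).mulVec y, ?_⟩
  funext i
  fin_cases i <;>
    simp [Matrix.mulVecLin_apply, Matrix.mulVec, dotProduct, Fin.sum_univ_three] <;> ring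

private lemma triangle_aux (f₁ f₂ g : (Fin 3 → ℝ) →ₗ[ℝ] Fin 3 → ℝ)
    (key : ∀ x, g x = f₁ (f₂ x) - f₂ (f₁ x))
    (hinj : ∀ x, g x = 0 → x = 0)
    (hsurj : ∀ y, ∃ x, g x = y)
    (W : Submodule ℝ (Fin 3 → ℝ)) (hbot : W ≠ ⊥) (htop : W ≠ ⊤)
    (hW1 : ∀ x ∈ W, f₁ x ∈ W) (hW2 : ∀ x ∈ W, f₂ x ∈ W) : False := by
  -- finrank of W is 1 or 2
  have htot : Module.finrank ℝ (Fin 3 → ℝ) = 3 := by simp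
  have hlt : Module.finrank ℝ W < 3 :=
    lt_of_lt_of_eq (Submodule.finrank_lt htop) htot
  have hpos : 0 < Module.finrank ℝ W := by
    rcases Nat.eq_zero_or_pos (Module.finrank ℝ W) with h | h
    · exact absurd (Submodule.finrank_eq_zero.mp h) hbot
    · exact h
  interval_cases h : Module.finrank ℝ W
  · -- dim 1 : common eigenvector
    obtain ⟨v, hv0, hv⟩ := finrank_eq_one_iff'.mp h
    obtain ⟨a, ha⟩ := hv ⟨f₁ ↑v, hW1 ↑v v.2⟩
    obtain ⟨b, hb⟩ := hv ⟨f₂ ↑v, hW2 ↑v v.2⟩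
    have ha' : f₁ (↑v : Fin 3 → ℝ) = a • ↑v := congrArg Subtype.val ha.symm
    have hb' : f₂ (↑v : Fin 3 → ℝ) = b • ↑v := congrArg Subtype.val hb.symm
    have : g (↑v : Fin 3 → ℝ) = 0 := by
      rw [key, hb', ha', LinearMap.map_smul, LinearMap.map_smul, ha', hb', smul_smul, smul_smul,
        mul_comm, sub_self]
    have : (↑v : Fin 3 → ℝ) = 0 := hinj _ this
    exact hv0 (Subtype.val_injective this)
  · -- dim 2
    have hq1 : Module.finrank ℝ ((Fin 3 → ℝ) ⧸ W) = 1 := by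
      have := Submodule.finrank_quotient_add_finrank W
      rw [h, htot] at this
      omega
    obtain ⟨e⟩ : Nonempty (((Fin 3 → ℝ) ⧸ W) ≃ₗ[ℝ] ℝ) :=
      FiniteDimensional.nonempty_linearEquiv_of_finrank_eq (by rw [hq1, Module.finrank_self])
    set q : (Fin 3 → ℝ) →ₗ[ℝ] ℝ := e.toLinearMap ∘ₗ W.mkQ with hqdef
    have hker : ∀ x, q x = 0 ↔ x ∈ W := by
      intro x
      rw [hqdef]
      simp [Submodule.Quotient.mk_eq_zero]
    have hqsurj : Function.Surjective q := e.surjective.comp W.mkQ_surjective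
    obtain ⟨u, hu⟩ := hqsurj 1
    have scalar : ∀ (ψ : (Fin 3 → ℝ) →ₗ[ℝ] ℝ), (∀ x ∈ W, ψ x = 0) →
        ∀ x, ψ x = ψ u * q x := by
      intro ψ hψ x
      have hmem : x - q x • u ∈ W := by
        rw [← hker]
        simp [hu]
      have := hψ _ hmem
      rw [map_sub, LinearMap.map_smul] at this
      simp only [smul_eq_mul] at this
      linarith [this]
    have s1 := scalar (q ∘ₗ f₁) (fun x hx => (hker _).mpr (hW1 x hx))
    have s2 := scalar (q ∘ₗ f₂) (fun x hx => (hker _).mpr (hW2 x hx))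
    simp only [LinearMap.comp_apply] at s1 s2
    have hrange : ∀ x, g x ∈ W := by
      intro x
      rw [← hker, key, map_sub, s1 (f₂ x), s2 (f₁ x), s1 x, s2 x]
      ring
    obtain ⟨y, hy⟩ := hsurj u
    have : q u = 0 := (hker u).mpr (hy ▸ hrange y)
    rw [hu] at this
    exact one_ne_zero this

theorem no_common_invariant_subspace_triangle :
    ¬ ∃ W : Submodule ℝ (Fin 3 → ℝ), W ≠ ⊥ ∧ W ≠ ⊤ ∧
      W.map (!![1, 2, 1; 1, 3, 2; 1, 3, 3] : Matrix (Fin 3) (Fin 3) ℝ).mulVecLin ≤ W ∧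
      W.map (!![1, 1, 4; 1, 2, 5; 1, 1, 5] : Matrix (Fin 3) (Fin 3) ℝ).mulVecLin ≤ W := by
  rintro ⟨W, hbot, htop, h1, h2⟩
  exact triangle_aux _ _ _ triangle_key triangle_inj triangle_surj W hbot htop
    (fun x hx => h1 ⟨x, hx, rfl⟩) (fun x hx => h2 ⟨x, hx, rfl⟩)
end

section
/- The matrices B₁ = [[1,2,1],[1,1,1],[1,2,2]] and B₂ = [[1,2,2],[2,4,3],[1,1,1]], viewed as linear maps of ℝ³, do not share a common proper invariant subspace: there is no ℝ-linear subspace W of ℝ³ with 0 ≠ W ≠ ℝ³ such that B₁·W ⊆ W and B₂·W ⊆ W. -/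
open Matrix

lemma aux_dim1 (A B : Matrix (Fin 3) (Fin 3) ℝ)
    (hdet : (A * B - B * A).det ≠ 0)
    (W : Submodule ℝ (Fin 3 → ℝ)) (hW : Module.finrank ℝ W = 1)
    (hA : W.map A.mulVecLin ≤ W) (hB : W.map B.mulVecLin ≤ W) : False := by
  have hbot : W ≠ ⊥ := fun h => by rw [h] at hW; simp at hW
  obtain ⟨v, hvW, hv⟩ := Submodule.exists_mem_ne_zero_of_ne_bot hbot
  have hspan : Submodule.span ℝ {v} = W :=
    Submodule.eq_of_le_of_finrank_eq (Submodule.span_le.2 (by simp [hvW]))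
      (by rw [finrank_span_singleton hv, hW])
  have hAv : A.mulVec v ∈ Submodule.span ℝ {v} := by
    rw [hspan]; exact hA ⟨v, hvW, rfl⟩
  have hBv : B.mulVec v ∈ Submodule.span ℝ {v} := by
    rw [hspan]; exact hB ⟨v, hvW, rfl⟩
  obtain ⟨a, ha⟩ := Submodule.mem_span_singleton.1 hAv
  obtain ⟨b, hb⟩ := Submodule.mem_span_singleton.1 hBv
  have hzero : (A * B - B * A).mulVec v = 0 := by
    rw [Matrix.sub_mulVec, ← Matrix.mulVec_mulVec, ← Matrix.mulVec_mulVec,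
      ← ha, ← hb, Matrix.mulVec_smul, Matrix.mulVec_smul, ← ha, ← hb,
      smul_comm, sub_self]
  apply hv
  have h2 := congrArg (fun w => (A * B - B * A)⁻¹.mulVec w) hzero
  simpa [Matrix.mulVec_mulVec, Matrix.nonsing_inv_mul _ (Ne.isUnit hdet)] using h2

theorem no_common_invariant_subspace_cassaigne :
    ¬ ∃ W : Submodule ℝ (Fin 3 → ℝ), W ≠ ⊥ ∧ W ≠ ⊤ ∧
      W.map (!![1, 2, 1; 1, 1, 1; 1, 2, 2] : Matrix (Fin 3) (Fin 3) ℝ).mulVecLin ≤ W ∧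
      W.map (!![1, 2, 2; 2, 4, 3; 1, 1, 1] : Matrix (Fin 3) (Fin 3) ℝ).mulVecLin ≤ W := by
  rintro ⟨W, hbot, htop, h1, h2⟩
  set A : Matrix (Fin 3) (Fin 3) ℝ := !![1, 2, 1; 1, 1, 1; 1, 2, 2] with hAdef
  set B : Matrix (Fin 3) (Fin 3) ℝ := !![1, 2, 2; 2, 4, 3; 1, 1, 1] with hBdef
  have hdet : (A * B - B * A).det ≠ 0 := by
    rw [hAdef, hBdef]
    norm_num [Matrix.mul_fin_three, Matrix.det_fin_three, Matrix.cons_val_two, Matrix.cons_val_one, Matrix.cons_val_zero, Matrix.tail_cons, Matrix.head_cons]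
  have hdetT : (Aᵀ * Bᵀ - Bᵀ * Aᵀ).det ≠ 0 := by
    rw [← Matrix.transpose_mul, ← Matrix.transpose_mul, ← Matrix.transpose_sub,
      Matrix.det_transpose, hAdef, hBdef]
    norm_num [Matrix.mul_fin_three, Matrix.det_fin_three, Matrix.cons_val_two, Matrix.cons_val_one, Matrix.cons_val_zero, Matrix.tail_cons, Matrix.head_cons]
  have hlt : Module.finrank ℝ W < 3 := by
    have := Submodule.finrank_lt (K := ℝ) (V := Fin 3 → ℝ) htop
    simpa using this
  have hpos : 0 < Module.finrank ℝ W :=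
    Nat.pos_of_ne_zero (fun h0 => hbot (Submodule.finrank_eq_zero.1 h0))
  interval_cases h : Module.finrank ℝ W
  · exact aux_dim1 A B hdet W h h1 h2
  · -- dim 2 case: orthogonal complement
    let W' : Submodule ℝ (EuclideanSpace ℝ (Fin 3)) := W.map (EuclideanSpace.equiv (Fin 3) ℝ).symm.toLinearEquiv.toLinearMap
    have hW'rank : Module.finrank ℝ W' = 2 := by rw [LinearEquiv.finrank_map_eq]; exact h
    have hUrank : Module.finrank ℝ W'ᗮ = 1 := by
      have := Submodule.finrank_add_finrank_orthogonal (K := W')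
      rw [hW'rank, finrank_euclideanSpace_fin] at this
      omega
    have key : ∀ (M : Matrix (Fin 3) (Fin 3) ℝ), Submodule.map M.mulVecLin W ≤ W →
        ∀ u : Fin 3 → ℝ, (WithLp.equiv 2 (Fin 3 → ℝ)).symm u ∈ W'ᗮ →
          (WithLp.equiv 2 (Fin 3 → ℝ)).symm (Mᵀ.mulVec u) ∈ W'ᗮ := by
      intro M hM u hu
      rw [Submodule.mem_orthogonal] at hu ⊢
      intro w hw
      have hMw : (WithLp.equiv 2 (Fin 3 → ℝ)).symm (M.mulVec ((WithLp.equiv 2 (Fin 3 → ℝ)) w)) ∈ W' :=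
        ⟨_, hM ⟨_, (Submodule.mem_map_equiv _).1 hw, rfl⟩, rfl⟩
      have h0 := hu _ hMw
      simp only [PiLp.inner_apply, RCLike.inner_apply, conj_trivial] at h0 ⊢
      calc ∑ x, ((WithLp.equiv 2 (Fin 3 → ℝ)).symm (Mᵀ *ᵥ u)).ofLp x * w.ofLp x
          = w.ofLp ⬝ᵥ Mᵀ.mulVec u := by simp [dotProduct, mul_comm]
        _ = M.mulVec w.ofLp ⬝ᵥ u := by rw [Matrix.dotProduct_mulVec, Matrix.vecMul_transpose]
        _ = ∑ x, ((WithLp.equiv 2 (Fin 3 → ℝ)).symm u).ofLp x * ((WithLp.equiv 2 (Fin 3 → ℝ)).symm (M *ᵥ (WithLp.equiv 2 (Fin 3 → ℝ)) w)).ofLp x := by simp [dotProduct, mul_comm]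
        _ = 0 := h0
    have hAT : Submodule.map Aᵀ.mulVecLin (W'ᗮ.map (EuclideanSpace.equiv (Fin 3) ℝ).toLinearEquiv.toLinearMap) ≤ W'ᗮ.map (EuclideanSpace.equiv (Fin 3) ℝ).toLinearEquiv.toLinearMap := by
      rintro x ⟨u, hu, rfl⟩; exact (Submodule.mem_map_equiv _).2 (key A h1 u ((Submodule.mem_map_equiv _).1 hu))
    have hBT : Submodule.map Bᵀ.mulVecLin (W'ᗮ.map (EuclideanSpace.equiv (Fin 3) ℝ).toLinearEquiv.toLinearMap) ≤ W'ᗮ.map (EuclideanSpace.equiv (Fin 3) ℝ).toLinearEquiv.toLinearMap := by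
      rintro x ⟨u, hu, rfl⟩; exact (Submodule.mem_map_equiv _).2 (key B h2 u ((Submodule.mem_map_equiv _).1 hu))
    exact aux_dim1 Aᵀ Bᵀ hdetT _ (by rw [LinearEquiv.finrank_map_eq]; exact hUrank) hAT hBT
end
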